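/- Let S : (I,s,x,y) ↦ (I⁺,s⁺,x⁺,y⁺) be given by I⁺ = I, s⁺ = s + ∂_I Φ(I, xy), y⁺ = x⁻¹ e^{−∂_r Φ(I,xy)}, x⁺ = x² y e^{∂_r Φ(I,xy)}, where Φ(I,r) is C². Then S preserves the product of the hyperbolic coordinates: x⁺ y⁺ = x y, and S is symplectic for the form dI ∧ ds + dy ∧ dx on the domain x > 0. -/

import Mathlib

set_option maxRecDepth 4000

noncomputable def Pr1 : (ℝ × ℝ × ℝ × ℝ) →L[ℝ] ℝ := ContinuousLinearMap.fst ℝ ℝ (ℝ × ℝ × ℝ)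
noncomputable def Pr2 : (ℝ × ℝ × ℝ × ℝ) →L[ℝ] ℝ :=
  (ContinuousLinearMap.fst ℝ ℝ (ℝ × ℝ)).comp (ContinuousLinearMap.snd ℝ ℝ (ℝ × ℝ × ℝ))
noncomputable def Pr3 : (ℝ × ℝ × ℝ × ℝ) →L[ℝ] ℝ :=
  (ContinuousLinearMap.fst ℝ ℝ ℝ).comp
    ((ContinuousLinearMap.snd ℝ ℝ (ℝ × ℝ)).comp (ContinuousLinearMap.snd ℝ ℝ (ℝ × ℝ × ℝ)))
noncomputable def Pr4 : (ℝ × ℝ × ℝ × ℝ) →L[ℝ] ℝ :=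
  (ContinuousLinearMap.snd ℝ ℝ ℝ).comp
    ((ContinuousLinearMap.snd ℝ ℝ (ℝ × ℝ)).comp (ContinuousLinearMap.snd ℝ ℝ (ℝ × ℝ × ℝ)))

@[simp] lemma Pr1_apply (z : ℝ × ℝ × ℝ × ℝ) : Pr1 z = z.1 := rfl
@[simp] lemma Pr2_apply (z : ℝ × ℝ × ℝ × ℝ) : Pr2 z = z.2.1 := rfl
@[simp] lemma Pr3_apply (z : ℝ × ℝ × ℝ × ℝ) : Pr3 z = z.2.2.1 := rfl
@[simp] lemma Pr4_apply (z : ℝ × ℝ × ℝ × ℝ) : Pr4 z = z.2.2.2 := rfl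



/-- The symplectic bilinear form dI∧ds + dy∧dx on coordinates (I,s,x,y) ∈ ℝ⁴,
evaluated on tangent vectors u, v. -/
noncomputable def Omega6 (u v : ℝ × ℝ × ℝ × ℝ) : ℝ :=
  u.1 * v.2.1 - u.2.1 * v.1 + u.2.2.2 * v.2.2.1 - u.2.2.1 * v.2.2.2

/-- The gluing map S : (I,s,x,y) ↦ (I, s + ∂_IΦ(I,xy),
x²y·e^{∂_rΦ(I,xy)}, x⁻¹e^{−∂_rΦ(I,xy)}) with Φ C² preserves the hyperbolic
product (x⁺y⁺ = xy) and is symplectic for dI∧ds + dy∧dx on {x > 0}. -/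
theorem stmt6 (Φ : ℝ × ℝ → ℝ) (hΦ : ContDiff ℝ 2 Φ)
    (ΦI Φr : ℝ × ℝ → ℝ)
    (hΦI : ΦI = fun p => deriv (fun I => Φ (I, p.2)) p.1)
    (hΦr : Φr = fun p => deriv (fun r => Φ (p.1, r)) p.2)
    (S : ℝ × ℝ × ℝ × ℝ → ℝ × ℝ × ℝ × ℝ)
    (hS : S = fun z =>
      (z.1, z.2.1 + ΦI (z.1, z.2.2.1 * z.2.2.2),
        z.2.2.1 ^ 2 * z.2.2.2 * Real.exp (Φr (z.1, z.2.2.1 * z.2.2.2)),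
        z.2.2.1⁻¹ * Real.exp (-(Φr (z.1, z.2.2.1 * z.2.2.2))))) :
    (∀ z : ℝ × ℝ × ℝ × ℝ, 0 < z.2.2.1 →
      (S z).2.2.1 * (S z).2.2.2 = z.2.2.1 * z.2.2.2) ∧
    (∀ z : ℝ × ℝ × ℝ × ℝ, 0 < z.2.2.1 →
      ∃ D : (ℝ × ℝ × ℝ × ℝ) →L[ℝ] (ℝ × ℝ × ℝ × ℝ),
        HasFDerivAt S D z ∧ ∀ u v, Omega6 (D u) (D v) = Omega6 u v) := by
  have hΦd : Differentiable ℝ Φ := hΦ.differentiable two_ne_zero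
  have hΦI' : ΦI = fun p => fderiv ℝ Φ p (1, 0) := by
    funext q
    rw [hΦI]
    exact ((hΦd q).hasFDerivAt.comp_hasDerivAt q.1
      (HasDerivAt.prodMk (hasDerivAt_id q.1) (hasDerivAt_const q.1 q.2))).deriv
  have hΦr' : Φr = fun p => fderiv ℝ Φ p (0, 1) := by
    funext q
    rw [hΦr]
    exact ((hΦd q).hasFDerivAt.comp_hasDerivAt q.2
      (HasDerivAt.prodMk (hasDerivAt_const q.2 q.1) (hasDerivAt_id q.2))).deriv
  constructor
  · intro z hx
    rw [hS]
    simp only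
    rw [Real.exp_neg]
    field_simp
  · intro z hx
    obtain ⟨I, s, x, y⟩ := z
    have hxne : x ≠ 0 := ne_of_gt hx
    have hFc : ContDiff ℝ 1 (fderiv ℝ Φ) := hΦ.fderiv_right (le_refl 2)
    have hFd : Differentiable ℝ (fderiv ℝ Φ) := hFc.differentiable one_ne_zero
    set f'' := fderiv ℝ (fderiv ℝ Φ) (I, x * y) with hf''def
    have hf'' : HasFDerivAt (fderiv ℝ Φ) f'' (I, x * y) := (hFd (I, x * y)).hasFDerivAt
    have hsymm : ∀ v w, f'' v w = f'' w v :=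
      second_derivative_symmetric (fun q => (hΦd q).hasFDerivAt) hf''
    set A1 : ((ℝ × ℝ) →L[ℝ] ℝ) →L[ℝ] ℝ :=
      ContinuousLinearMap.apply ℝ ℝ ((1 : ℝ), (0 : ℝ)) with hA1
    set A2 : ((ℝ × ℝ) →L[ℝ] ℝ) →L[ℝ] ℝ :=
      ContinuousLinearMap.apply ℝ ℝ ((0 : ℝ), (1 : ℝ)) with hA2
    have hΦId : HasFDerivAt ΦI (A1.comp f'') (I, x * y) := by
      rw [hΦI']
      exact A1.hasFDerivAt.comp (I, x * y) hf''
    have hΦrd : HasFDerivAt Φr (A2.comp f'') (I, x * y) := by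
      rw [hΦr']
      exact A2.hasFDerivAt.comp (I, x * y) hf''
    have h1 : HasFDerivAt (fun z : ℝ × ℝ × ℝ × ℝ => z.1) Pr1 (I, s, x, y) := Pr1.hasFDerivAt
    have h2 : HasFDerivAt (fun z : ℝ × ℝ × ℝ × ℝ => z.2.1) Pr2 (I, s, x, y) := Pr2.hasFDerivAt
    have h3 : HasFDerivAt (fun z : ℝ × ℝ × ℝ × ℝ => z.2.2.1) Pr3 (I, s, x, y) := Pr3.hasFDerivAt
    have h4 : HasFDerivAt (fun z : ℝ × ℝ × ℝ × ℝ => z.2.2.2) Pr4 (I, s, x, y) := Pr4.hasFDerivAt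
    have hmul : HasFDerivAt (fun z : ℝ × ℝ × ℝ × ℝ => z.2.2.1 * z.2.2.2)
        (x • Pr4 + y • Pr3) (I, s, x, y) := h3.mul h4
    have hG : HasFDerivAt (fun z : ℝ × ℝ × ℝ × ℝ => (z.1, z.2.2.1 * z.2.2.2))
        (Pr1.prod (x • Pr4 + y • Pr3)) (I, s, x, y) := HasFDerivAt.prodMk h1 hmul
    have hΦIG := hΦId.comp (I, s, x, y) hG
    have hΦrG := hΦrd.comp (I, s, x, y) hG
    have hc2 := h2.add hΦIG
    have hexp := hΦrG.exp
    have hsq := h3.mul h3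
    have hx2y := hsq.mul h4
    have hc3 := hx2y.mul hexp
    have hinv := (hasDerivAt_inv hxne).comp_hasFDerivAt (I, s, x, y) h3
    have hnexp := hΦrG.neg.exp
    have hc4 := hinv.mul hnexp
    set G' : (ℝ × ℝ × ℝ × ℝ) →L[ℝ] (ℝ × ℝ) := Pr1.prod (x • Pr4 + y • Pr3) with hG'
    set EX : ℝ := Real.exp (Φr (I, x * y)) with hEX
    set ENX : ℝ := Real.exp (-(Φr (I, x * y))) with hENX
    refine ⟨Pr1.prod ((Pr2 + (A1.comp f'').comp G').prod
      (((x * x * y) • EX • (A2.comp f'').comp G' +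
          EX • ((x * x) • Pr4 + y • (x • Pr3 + x • Pr3))).prod
        (x⁻¹ • ENX • -((A2.comp f'').comp G') + ENX • -(x ^ 2)⁻¹ • Pr3))), ?_, ?_⟩
    · have hSalt : S = fun z : ℝ × ℝ × ℝ × ℝ =>
          (z.1, z.2.1 + ΦI (z.1, z.2.2.1 * z.2.2.2),
            z.2.2.1 * z.2.2.1 * z.2.2.2 * Real.exp (Φr (z.1, z.2.2.1 * z.2.2.2)),
            z.2.2.1⁻¹ * Real.exp (-(Φr (z.1, z.2.2.1 * z.2.2.2)))) := by
        rw [hS]; funext z; simp [pow_two]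
      rw [hSalt]
      exact HasFDerivAt.prodMk h1 (HasFDerivAt.prodMk hc2 (HasFDerivAt.prodMk hc3 hc4))
    · intro u v
      simp only [Omega6, ContinuousLinearMap.prod_apply, ContinuousLinearMap.add_apply,
        ContinuousLinearMap.comp_apply, ContinuousLinearMap.smul_apply,
        ContinuousLinearMap.neg_apply, ContinuousLinearMap.apply_apply,
        Pr1_apply, Pr2_apply, Pr3_apply, Pr4_apply, smul_eq_mul]
      obtain ⟨La, hLa⟩ : ∃ L : (ℝ × ℝ) →L[ℝ] ℝ, L = f'' ((1 : ℝ), (0 : ℝ)) := ⟨_, rfl⟩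
      obtain ⟨Lb, hLb⟩ : ∃ L : (ℝ × ℝ) →L[ℝ] ℝ, L = f'' ((0 : ℝ), (1 : ℝ)) := ⟨_, rfl⟩
      have hdec : ∀ p q : ℝ, ∀ r : ℝ × ℝ, f'' (p, q) r = p * La r + q * Lb r := by
        intro p q r
        have hw : ((p, q) : ℝ × ℝ) = p • ((1 : ℝ), (0 : ℝ)) + q • ((0 : ℝ), (1 : ℝ)) := by
          simp [Prod.ext_iff]
        rw [hw, map_add, map_smul, map_smul]
        rw [← hLa, ← hLb]; simp
      have hGapp : ∀ w : ℝ × ℝ × ℝ × ℝ, G' w = (w.1, x * w.2.2.2 + y * w.2.2.1) := by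
        intro w
        simp [hG', Prod.ext_iff]
      simp only [hGapp]
      simp only [hA1, hA2]
      simp only [ContinuousLinearMap.apply_apply]
      simp only [hdec]
      have hba : Lb ((1 : ℝ), (0 : ℝ)) = La ((0 : ℝ), (1 : ℝ)) := by
        rw [hLa, hLb]; exact hsymm _ _
      simp only [hba]
      have hE : ENX = EX⁻¹ := by rw [hENX, hEX, Real.exp_neg]
      have hEXne : EX ≠ 0 := by rw [hEX]; exact Real.exp_ne_zero _
      rw [hE]
      field_simp
      ring
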